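/- For every integer N ≥ 0, the identity Σ_{(n,m): n,m ≥ 0, n+m = N} 1 / [ ∏_{s=1}^{n} (1 − t^{−s})(1 − Q^{−1} t^{n−m−s}) · ∏_{s=1}^{m} (1 − t^{−s})(1 − Q t^{m−n−s}) ] = 1 / ∏_{s=1}^{N} (1 − t^{−s}) holds in the field ℚ(t, Q) of rational functions in two variables t and Q (equivalently, for all complex t, Q for which every factor appearing in a denominator is nonzero). -/

import Mathlib

open Finset

namespace AGTaux
noncomputable def Af (t : ℂ) (n : ℕ) : ℂ := ∏ s ∈ Finset.Icc 1 n, (1 - t ^ (-(s:ℤ)))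
noncomputable def Pz (t Q : ℂ) (a b : ℤ) : ℂ := ∏ e ∈ Finset.Icc a b, (1 - Q⁻¹ * t ^ e)
noncomputable def Pq (t Q : ℂ) (a b : ℤ) : ℂ := ∏ e ∈ Finset.Icc a b, (1 - Q * t ^ e)
noncomputable def fterm (t Q : ℂ) (n m : ℕ) : ℂ :=
  1 / (Af t n * Pz t Q (-(m:ℤ)) ((n:ℤ)-(m:ℤ)-1) * (Af t m * Pq t Q (-(n:ℤ)) ((m:ℤ)-(n:ℤ)-1)))

lemma prod_Icc_top (g : ℤ → ℂ) {a b : ℤ} (h : a ≤ b + 1) :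
    ∏ e ∈ Finset.Icc a (b+1), g e = (∏ e ∈ Finset.Icc a b, g e) * g (b+1) := by
  have h1 : Finset.Icc a (b+1) = insert (b+1) (Finset.Icc a b) := by
    ext x; simp only [Finset.mem_Icc, Finset.mem_insert]; omega
  rw [h1, Finset.prod_insert (by simp only [Finset.mem_Icc]; omega), mul_comm]

lemma prod_Icc_bot (g : ℤ → ℂ) {a b : ℤ} (h : a ≤ b) :
    ∏ e ∈ Finset.Icc a b, g e = g a * ∏ e ∈ Finset.Icc (a+1) b, g e := by
  have h1 : Finset.Icc a b = insert a (Finset.Icc (a+1) b) := by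
    ext x; simp only [Finset.mem_Icc, Finset.mem_insert]; omega
  rw [h1, Finset.prod_insert (by simp only [Finset.mem_Icc]; omega)]

lemma Af_succ (t : ℂ) (n : ℕ) : Af t (n+1) = Af t n * (1 - t ^ (-((n:ℤ)+1))) := by
  rw [Af, Af, Finset.prod_Icc_succ_top (by omega)]
  push_cast
  ring_nf

lemma B_reindex (t Q : ℂ) (n m : ℕ) :
    ∏ s ∈ Finset.Icc 1 n, (1 - Q⁻¹ * t ^ ((n:ℤ) - (m:ℤ) - (s:ℤ)))
      = Pz t Q (-(m:ℤ)) ((n:ℤ)-(m:ℤ)-1) := by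
  rw [Pz]
  refine Finset.prod_nbij' (fun s => (n:ℤ) - m - s) (fun e => ((n:ℤ) - m - e).toNat)
    ?_ ?_ ?_ ?_ ?_
  · intro a ha; simp only [Finset.mem_Icc] at *; omega
  · intro a ha; simp only [Finset.mem_Icc] at *; omega
  · intro a ha; simp only [Finset.mem_Icc] at *; omega
  · intro a ha; simp only [Finset.mem_Icc] at *; omega
  · intro a ha; rfl

lemma C_reindex (t Q : ℂ) (n m : ℕ) :
    ∏ s ∈ Finset.Icc 1 m, (1 - Q * t ^ ((m:ℤ) - (n:ℤ) - (s:ℤ)))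
      = Pq t Q (-(n:ℤ)) ((m:ℤ)-(n:ℤ)-1) := by
  rw [Pq]
  refine Finset.prod_nbij' (fun s => (m:ℤ) - n - s) (fun e => ((m:ℤ) - n - e).toNat)
    ?_ ?_ ?_ ?_ ?_
  · intro a ha; simp only [Finset.mem_Icc] at *; omega
  · intro a ha; simp only [Finset.mem_Icc] at *; omega
  · intro a ha; simp only [Finset.mem_Icc] at *; omega
  · intro a ha; simp only [Finset.mem_Icc] at *; omega
  · intro a ha; rfl

variable {t Q : ℂ}

lemma tzpow_ne_one (ht : t ≠ 0) (htru : ∀ s : ℕ, 0 < s → t ^ s ≠ 1)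
    {e : ℤ} (he : e ≠ 0) : t ^ e ≠ 1 := by
  intro h
  have hnat : t ^ (e.natAbs) = 1 := by
    rcases Int.natAbs_eq e with h1 | h1
    · rw [← zpow_natCast, ← h1, h]
    · have : t ^ (-e) = 1 := by rw [zpow_neg, h, inv_one]
      rw [← zpow_natCast, show ((e.natAbs : ℕ):ℤ) = -e by omega]; exact this
  exact htru e.natAbs (by omega) hnat

lemma one_sub_tzpow_ne (ht : t ≠ 0) (htru : ∀ s : ℕ, 0 < s → t ^ s ≠ 1)
    {e : ℤ} (he : e ≠ 0) : 1 - t ^ e ≠ 0 := by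
  intro h
  exact tzpow_ne_one ht htru he (by linear_combination -h)

lemma one_sub_zQT_ne (hQt : ∀ k : ℤ, Q ≠ t ^ k) (hQ : Q ≠ 0) (e : ℤ) :
    1 - Q⁻¹ * t ^ e ≠ 0 := by
  intro h
  apply hQt e
  field_simp at h
  linear_combination h

lemma one_sub_QT_ne (ht : t ≠ 0) (hQt : ∀ k : ℤ, Q ≠ t ^ k) (e : ℤ) :
    1 - Q * t ^ e ≠ 0 := by
  intro h
  apply hQt (-e)
  have hte : t ^ e ≠ 0 := zpow_ne_zero _ ht
  rw [zpow_neg]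
  field_simp
  linear_combination -h

lemma Q_sub_T_ne (hQt : ∀ k : ℤ, Q ≠ t ^ k) (e : ℤ) : Q - t ^ e ≠ 0 := by
  intro h; exact hQt e (by linear_combination h)

lemma Af_ne (ht : t ≠ 0) (htru : ∀ s : ℕ, 0 < s → t ^ s ≠ 1) (n : ℕ) : Af t n ≠ 0 := by
  rw [Af]
  apply Finset.prod_ne_zero_iff.2
  intro s hs
  simp only [Finset.mem_Icc] at hs
  exact one_sub_tzpow_ne ht htru (by omega)

lemma Pz_ne (hQt : ∀ k : ℤ, Q ≠ t ^ k) (hQ : Q ≠ 0) (a b : ℤ) : Pz t Q a b ≠ 0 := by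
  rw [Pz]; exact Finset.prod_ne_zero_iff.2 fun e _ => one_sub_zQT_ne hQt hQ e

lemma Pq_ne (ht : t ≠ 0) (hQt : ∀ k : ℤ, Q ≠ t ^ k) (a b : ℤ) : Pq t Q a b ≠ 0 := by
  rw [Pq]; exact Finset.prod_ne_zero_iff.2 fun e _ => one_sub_QT_ne ht hQt e

/-- remove one factor from the bottom, i.e. `B''` relation. -/
lemma relB2 (t Q : ℂ) (p q : ℤ) (hp : 0 ≤ p) :
    Pz t Q (-q-1) (p-q-2) * (1 - Q⁻¹ * t ^ (p-q-1))
      = (1 - Q⁻¹ * t ^ (-q-1)) * Pz t Q (-q) (p-q-1) := by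
  unfold Pz
  have e2 := prod_Icc_top (fun e => 1 - Q⁻¹ * t ^ e) (a := -q-1) (b := p-q-2)
    (by omega)
  rw [show p-q-2+1 = p-q-1 by ring] at e2
  have e3 := prod_Icc_bot (fun e => 1 - Q⁻¹ * t ^ e) (a := -q-1) (b := p-q-1)
    (by omega)
  rw [show -q-1+1 = -q by ring] at e3
  rw [← e2, e3]

/-- `B'` relation: remove bottom, add two on top. -/
lemma relB1 (t Q : ℂ) (p q : ℤ) (hp : 0 ≤ p) :
    Pz t Q (-q-1) (p-q-2) * ((1 - Q⁻¹ * t ^ (p-q-1)) * (1 - Q⁻¹ * t ^ (p-q)))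
      = (1 - Q⁻¹ * t ^ (-q-1)) * Pz t Q (-q) (p-q) := by
  unfold Pz
  have e1 := prod_Icc_top (fun e => 1 - Q⁻¹ * t ^ e) (a := -q-1) (b := p-q-1)
    (by omega)
  rw [show p-q-1+1 = p-q by ring] at e1
  have e2 := prod_Icc_top (fun e => 1 - Q⁻¹ * t ^ e) (a := -q-1) (b := p-q-2)
    (by omega)
  rw [show p-q-2+1 = p-q-1 by ring] at e2
  have e3 := prod_Icc_bot (fun e => 1 - Q⁻¹ * t ^ e) (a := -q-1) (b := p-q)
    (by omega)
  rw [show -q-1+1 = -q by ring] at e3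
  rw [← mul_assoc, ← e2, ← e1, e3]

/-- `C''` relation: remove one factor from the top. -/
lemma relC2 (t Q : ℂ) (p q : ℤ) (hq : 0 ≤ q) :
    Pq t Q (-p) (q-p) = Pq t Q (-p) (q-p-1) * (1 - Q * t ^ (q-p)) := by
  unfold Pq
  have e1 := prod_Icc_top (fun e => 1 - Q * t ^ e) (a := -p) (b := q-p-1)
    (by omega)
  rw [show q-p-1+1 = q-p by ring] at e1
  exact e1

/-- `C'` relation: add one at bottom, remove two at top. -/
lemma relC1 (t Q : ℂ) (p q : ℤ) (hq : 0 ≤ q) :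
    Pq t Q (-p-1) (q-p-2) * ((1 - Q * t ^ (q-p-1)) * (1 - Q * t ^ (q-p)))
      = (1 - Q * t ^ (-p-1)) * Pq t Q (-p) (q-p) := by
  unfold Pq
  have e1 := prod_Icc_top (fun e => 1 - Q * t ^ e) (a := -p-1) (b := q-p-1)
    (by omega)
  rw [show q-p-1+1 = q-p by ring] at e1
  have e2 := prod_Icc_top (fun e => 1 - Q * t ^ e) (a := -p-1) (b := q-p-2)
    (by omega)
  rw [show q-p-2+1 = q-p-1 by ring] at e2
  have e3 := prod_Icc_bot (fun e => 1 - Q * t ^ e) (a := -p-1) (b := q-p)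
    (by omega)
  rw [show -p-1+1 = -p by ring] at e3
  rw [← mul_assoc, ← e2, ← e1, e3]

set_option maxHeartbeats 1000000 in
lemma key (t Q X Y u v' B C : ℂ)
    (ht : t ≠ 0) (hX : X ≠ 0)
    (hu : u ≠ 0) (hv' : v' ≠ 0) (hB : B ≠ 0) (hC : C ≠ 0)
    (hY1 : Y - 1 ≠ 0) (hQYX : Q*Y - X ≠ 0) (hQYXt : Q*Y - X*t ≠ 0) :
    (X*Y-1)/(u*B*v'*C*(Y-1)*X) - (Q*Y-1)*(X*t-Q*Y)/(u*B*v'*C*(Q*Y-X)*X*t)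
      = -((Q*Y-1)*Q*Y*(X*t-Q*Y))/(u*B*v'*C*(Q*Y-X)*(Q*Y-X*t)*X*t)
        - (1-X)*(Q-X)*Y/(u*B*v'*C*X*(Q*Y-X)*(Y-1)) := by
  have d1 : u*B*v'*C*(Y-1)*X ≠ 0 := by apply_rules [mul_ne_zero]
  have d2 : u*B*v'*C*(Q*Y-X)*X*t ≠ 0 := by apply_rules [mul_ne_zero]
  have d3 : u*B*v'*C*(Q*Y-X)*(Q*Y-X*t)*X*t ≠ 0 := by apply_rules [mul_ne_zero]
  have d4 : u*B*v'*C*X*(Q*Y-X)*(Y-1) ≠ 0 := by apply_rules [mul_ne_zero]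
  rw [div_sub_div _ _ d1 d2, div_sub_div _ _ d3 d4,
    div_eq_div_iff (mul_ne_zero d1 d2) (mul_ne_zero d3 d4)]
  ring

lemma keyE1 (X Y u v' B C : ℂ) (hu : u ≠ 0) (hv' : v' ≠ 0) (hB : B ≠ 0) (hC : C ≠ 0)
    (hX : X ≠ 0) (hY : Y ≠ 0) (hY1 : Y - 1 ≠ 0) :
    1/(u * B * (v' * (1 - Y⁻¹) * C)) * (1 - (X*Y)⁻¹) = (X*Y-1)/(u*B*v'*C*(Y-1)*X) := by
  have h2 : (1:ℂ) - Y⁻¹ = (Y-1)/Y := by field_simp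
  have h3 : (1:ℂ) - (X*Y)⁻¹ = (X*Y-1)/(X*Y) := by field_simp
  have hD : u * B * (v' * ((Y-1)/Y) * C) = (u*B*v'*C*(Y-1))/Y := by ring
  rw [h2, h3, hD, one_div_div, div_mul_div_comm,
    div_eq_div_iff (by apply_rules [mul_ne_zero]) (by apply_rules [mul_ne_zero])]
  ring

lemma keyE2 (t Q X Y u v' B C B'' C'' : ℂ) (ht : t ≠ 0) (hQ : Q ≠ 0) (hX : X ≠ 0) (hY : Y ≠ 0)
    (hu : u ≠ 0) (hv' : v' ≠ 0) (hB : B ≠ 0) (hC : C ≠ 0)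
    (hQY1 : Q*Y - 1 ≠ 0) (hQYX : Q*Y - X ≠ 0) (hXtQY : X*t - Q*Y ≠ 0)
    (RB2 : B * (1 - Q⁻¹*(X/Y)) = (1 - Q⁻¹*Y⁻¹) * B'')
    (RC2 : C = C'' * (1 - Q*(Y/(X*t)))) :
    1/(u * B'' * (v' * C'')) = (Q*Y-1)*(X*t-Q*Y)/(u*B*v'*C*(Q*Y-X)*X*t) := by
  have w1 : (1:ℂ) - Q⁻¹*(X/Y) = (Q*Y-X)/(Q*Y) := by field_simp
  have w2 : (1:ℂ) - Q⁻¹*Y⁻¹ = (Q*Y-1)/(Q*Y) := by field_simp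
  have w3 : (1:ℂ) - Q*(Y/(X*t)) = (X*t-Q*Y)/(X*t) := by field_simp
  rw [w1, w2] at RB2
  rw [w3] at RC2
  have hB'' : B'' = B * ((Q*Y-X)/(Q*Y)) * (Q*Y) / (Q*Y-1) := by
    rw [eq_div_iff hQY1]
    field_simp at RB2 ⊢
    first
    | linear_combination RB2
    | linear_combination -RB2
    | linear_combination 2*RB2
    | linear_combination -2*RB2
  have hC'' : C'' = C * (X*t) / (X*t-Q*Y) := by
    rw [eq_div_iff hXtQY]
    field_simp at RC2 ⊢
    first
    | linear_combination RC2
    | linear_combination -RC2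
    | linear_combination 2*RC2
    | linear_combination -2*RC2
  rw [hB'', hC'']
  field_simp
lemma keyE4 (Q X Y u v' B C : ℂ) (hQ : Q ≠ 0) (hX : X ≠ 0) (hY : Y ≠ 0)
    (hu : u ≠ 0) (hv' : v' ≠ 0) (hB : B ≠ 0) (hC : C ≠ 0)
    (hY1 : Y - 1 ≠ 0) (hQYX : Q*Y - X ≠ 0) :
    (X*Y)⁻¹*(1-X)*(Q-X)/(Q-X/Y) * (1/(u*B*(v'*(1-Y⁻¹)*C)))
      = (1-X)*(Q-X)*Y/(u*B*v'*C*X*(Q*Y-X)*(Y-1)) := by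
  have w2 : (1:ℂ) - Y⁻¹ = (Y-1)/Y := by field_simp
  have wq : Q - X/Y = (Q*Y-X)/Y := by field_simp
  have hD : u * B * (v' * ((Y-1)/Y) * C) = (u*B*v'*C*(Y-1))/Y := by ring
  rw [w2, wq, hD, one_div_div, div_div_eq_mul_div, div_mul_div_comm,
    div_eq_div_iff
      (mul_ne_zero hQYX (by apply_rules [mul_ne_zero]))
      (by apply_rules [mul_ne_zero])]
  have hXYi : (X*Y)⁻¹ * (X*Y) = 1 := inv_mul_cancel₀ (mul_ne_zero hX hY)
  linear_combination ((1-X)*(Q-X)*Y*(u*B*v'*C)*(Q*Y-X)*(Y-1)) * hXYi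
set_option maxHeartbeats 1000000 in
lemma keyE3 (t Q X Y u v' B C B' C' : ℂ) (ht : t ≠ 0) (hQ : Q ≠ 0) (hX : X ≠ 0) (hY : Y ≠ 0)
    (hu : u ≠ 0) (hv' : v' ≠ 0) (hB : B ≠ 0) (hC : C ≠ 0)
    (hXt1 : X*t - 1 ≠ 0) (hQY1 : Q*Y - 1 ≠ 0) (hQYX : Q*Y - X ≠ 0)
    (hQYXt : Q*Y - X*t ≠ 0) (hXtQ : X*t - Q ≠ 0) (hXt2QY : X*t*t - Q*Y ≠ 0)
    (hQYXt2 : Q*Y - X*t*t ≠ 0)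
    (RB1 : B * ((1 - Q⁻¹*(X/Y)) * (1 - Q⁻¹*(X*t/Y))) = (1 - Q⁻¹*Y⁻¹) * B')
    (RC1 : C' * ((1 - Q*(Y/(X*t*t))) * (1 - Q*(Y/(X*t)))) = (1 - Q*(X*t)⁻¹) * C) :
    (X*Y)⁻¹*(1-X*t)*(Q-X*t)/(Q-X*t*t/Y) * (1/((u*(1-(X*t)⁻¹))*B'*(v'*C')))
      = -((Q*Y-1)*Q*Y*(X*t-Q*Y))/(u*B*v'*C*(Q*Y-X)*(Q*Y-X*t)*X*t) := by
  have hQYne : Q*Y ≠ 0 := mul_ne_zero hQ hY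
  have hXtne : X*t ≠ 0 := mul_ne_zero hX ht
  have wB1a : (1:ℂ) - Q⁻¹*(X/Y) = (Q*Y-X)/(Q*Y) := by field_simp
  have wB1b : (1:ℂ) - Q⁻¹*(X*t/Y) = (Q*Y-X*t)/(Q*Y) := by field_simp
  have w2 : (1:ℂ) - Q⁻¹*Y⁻¹ = (Q*Y-1)/(Q*Y) := by field_simp
  have wC1a : (1:ℂ) - Q*(Y/(X*t*t)) = (X*t*t-Q*Y)/(X*t*t) := by field_simp
  have wC1b : (1:ℂ) - Q*(Y/(X*t)) = (X*t-Q*Y)/(X*t) := by field_simp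
  have wC1c : (1:ℂ) - Q*(X*t)⁻¹ = (X*t-Q)/(X*t) := by field_simp
  have wu : (1:ℂ) - (X*t)⁻¹ = (X*t-1)/(X*t) := by field_simp
  have wq3 : Q - X*t*t/Y = (Q*Y-X*t*t)/Y := by field_simp
  rw [wB1a, wB1b, w2] at RB1
  rw [wC1a, wC1b, wC1c] at RC1
  have hB' : B' = B * (Q*Y-X) * (Q*Y-X*t) / ((Q*Y-1)*(Q*Y)) := by
    rw [eq_div_iff (mul_ne_zero hQY1 hQYne)]
    apply mul_right_cancel₀ hQYne
    field_simp at RB1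
    linear_combination (-(Q*Y)) * RB1
  have hC' : C' = (X*t-Q)*C*(X*t*t) / ((X*t*t-Q*Y)*(X*t-Q*Y)) := by
    rw [eq_div_iff (mul_ne_zero hXt2QY (by intro h; exact hQYXt (by linear_combination -h)))]
    apply mul_right_cancel₀ hXtne
    field_simp at RC1
    linear_combination (X*t) * RC1
  have hXtQYb : X*t - Q*Y ≠ 0 := by intro h; exact hQYXt (by linear_combination -h)
  have hDENne : (X*t)*((Q*Y-1)*(Q*Y))*((X*t*t-Q*Y)*(X*t-Q*Y)) ≠ 0 := by
    apply_rules [mul_ne_zero]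
  have hNUMden : (Q*Y-X*t*t)*(u*(X*t-1)*B*(Q*Y-X)*(Q*Y-X*t)*v'*(X*t-Q)*C*(X*t*t)) ≠ 0 := by
    apply_rules [mul_ne_zero]
  have hDen : (u*(1-(X*t)⁻¹))*B'*(v'*C')
      = (u*(X*t-1)*B*(Q*Y-X)*(Q*Y-X*t)*v'*(X*t-Q)*C*(X*t*t))
        / ((X*t)*((Q*Y-1)*(Q*Y))*((X*t*t-Q*Y)*(X*t-Q*Y))) := by
    rw [wu, hB', hC', eq_div_iff hDENne]
    have hXt2QY' : X*t^2 - Q*Y ≠ 0 := by rw [sq, ← mul_assoc]; exact hXt2QY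
    field_simp
  rw [hDen, wq3, one_div_div, div_div_eq_mul_div, div_mul_div_comm,
    div_eq_div_iff hNUMden (by apply_rules [mul_ne_zero])]
  have hXYi : (X*Y)⁻¹ * (X*Y) = 1 := inv_mul_cancel₀ (mul_ne_zero hX hY)
  linear_combination ((1-X*t)*(Q-X*t)*t*((X*t)*((Q*Y-1)*(Q*Y))*((X*t*t-Q*Y)*(X*t-Q*Y)))
    *(u*B*v'*C*(Q*Y-X)*(Q*Y-X*t))) * hXYi

set_option maxHeartbeats 1000000 in
lemma tele (ht : t ≠ 0) (hQ : Q ≠ 0) (htru : ∀ s : ℕ, 0 < s → t ^ s ≠ 1)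
    (hQt : ∀ k : ℤ, Q ≠ t ^ k) (n m' : ℕ) :
    fterm t Q n (m'+1) * (1 - t ^ (-((n:ℤ)+(m':ℤ)+1))) - fterm t Q n m'
      = t ^ (-((n:ℤ)+(m':ℤ)+1)) * (1 - t^((n:ℤ)+1)) * (Q - t^((n:ℤ)+1)) / (Q - t^((n:ℤ)-(m':ℤ)+1))
          * fterm t Q (n+1) m'
        - t ^ (-((n:ℤ)+(m':ℤ)+1)) * (1 - t^(n:ℤ)) * (Q - t^(n:ℤ)) / (Q - t^((n:ℤ)-(m':ℤ)-1))
          * fterm t Q n (m'+1) := by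
  set X := t ^ (n:ℤ) with hXd
  set Y := t ^ ((m':ℤ)+1) with hYd
  set u := Af t n with hud
  set v' := Af t m' with hv'd
  set B := Pz t Q (-(m':ℤ)-1) ((n:ℤ)-(m':ℤ)-2) with hBd
  set C := Pq t Q (-(n:ℤ)) ((m':ℤ)-(n:ℤ)) with hCd
  set B'' := Pz t Q (-(m':ℤ)) ((n:ℤ)-(m':ℤ)-1) with hB''d
  set C'' := Pq t Q (-(n:ℤ)) ((m':ℤ)-(n:ℤ)-1) with hC''d
  set B' := Pz t Q (-(m':ℤ)) ((n:ℤ)-(m':ℤ)) with hB'd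
  set C' := Pq t Q (-(n:ℤ)-1) ((m':ℤ)-(n:ℤ)-2) with hC'd
  have hX : X ≠ 0 := by rw [hXd]; exact zpow_ne_zero _ ht
  have hY : Y ≠ 0 := by rw [hYd]; exact zpow_ne_zero _ ht
  have hu : u ≠ 0 := by rw [hud]; exact Af_ne ht htru n
  have hv' : v' ≠ 0 := by rw [hv'd]; exact Af_ne ht htru m'
  have hB : B ≠ 0 := by rw [hBd]; exact Pz_ne hQt hQ _ _
  have hC : C ≠ 0 := by rw [hCd]; exact Pq_ne ht hQt _ _
  have cXt : t ^ ((n:ℤ)+1) = X*t := by rw [zpow_add_one₀ ht, ← hXd]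
  have cXtt : t ^ ((n:ℤ)+1+1) = X*t*t := by rw [zpow_add_one₀ ht, cXt]
  have cYinv : t ^ (-(m':ℤ)-1) = Y⁻¹ := by
    rw [show -(m':ℤ)-1 = -((m':ℤ)+1) by ring, zpow_neg, ← hYd]
  have cYinv' : t ^ (-((m':ℤ)+1)) = Y⁻¹ := by rw [zpow_neg, ← hYd]
  have cXtinv : t ^ (-(n:ℤ)-1) = (X*t)⁻¹ := by
    rw [show -(n:ℤ)-1 = -((n:ℤ)+1) by ring, zpow_neg, cXt]
  have cXtinv' : t ^ (-((n:ℤ)+1)) = (X*t)⁻¹ := by rw [zpow_neg, cXt]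
  have cXY1 : t ^ ((n:ℤ)-(m':ℤ)-1) = X/Y := by
    rw [show (n:ℤ)-(m':ℤ)-1 = (n:ℤ)-((m':ℤ)+1) by ring, zpow_sub₀ ht, ← hXd, ← hYd]
  have cXY2 : t ^ ((n:ℤ)-(m':ℤ)) = X*t/Y := by
    rw [show (n:ℤ)-(m':ℤ) = ((n:ℤ)+1)-((m':ℤ)+1) by ring, zpow_sub₀ ht, cXt, ← hYd]
  have cXY3 : t ^ ((n:ℤ)-(m':ℤ)+1) = X*t*t/Y := by
    rw [show (n:ℤ)-(m':ℤ)+1 = ((n:ℤ)+1+1)-((m':ℤ)+1) by ring, zpow_sub₀ ht, cXtt, ← hYd]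
  have cYX : t ^ ((m':ℤ)-(n:ℤ)) = Y/(X*t) := by
    rw [show (m':ℤ)-(n:ℤ) = ((m':ℤ)+1)-((n:ℤ)+1) by ring, zpow_sub₀ ht, cXt, ← hYd]
  have cYX2 : t ^ ((m':ℤ)-(n:ℤ)-1) = Y/(X*t*t) := by
    rw [show (m':ℤ)-(n:ℤ)-1 = ((m':ℤ)+1)-((n:ℤ)+1+1) by ring, zpow_sub₀ ht, cXtt, ← hYd]
  have cXYinv : t ^ (-((n:ℤ)+(m':ℤ)+1)) = (X*Y)⁻¹ := by
    rw [show -((n:ℤ)+(m':ℤ)+1) = -((n:ℤ)+((m':ℤ)+1)) by ring, zpow_neg, zpow_add₀ ht,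
      ← hXd, ← hYd]
  have hY1 : Y - 1 ≠ 0 := by
    have h1 := one_sub_tzpow_ne ht htru (e := (m':ℤ)+1) (by omega)
    rw [← hYd] at h1
    intro h; exact h1 (by linear_combination -h)
  have hXt1 : X*t - 1 ≠ 0 := by
    have h1 := one_sub_tzpow_ne ht htru (e := (n:ℤ)+1) (by omega)
    rw [cXt] at h1
    intro h; exact h1 (by linear_combination -h)
  have hQY1 : Q*Y - 1 ≠ 0 := by
    have h1 := Q_sub_T_ne hQt (-((m':ℤ)+1))
    rw [zpow_neg, ← hYd] at h1
    intro h; apply h1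
    field_simp
    first
    | linear_combination h
    | linear_combination -h
  have hQYX : Q*Y - X ≠ 0 := by
    have h1 := Q_sub_T_ne hQt ((n:ℤ)-(m':ℤ)-1)
    rw [cXY1] at h1
    intro h; apply h1
    field_simp
    first
    | linear_combination h
    | linear_combination -h
  have hQYXt : Q*Y - X*t ≠ 0 := by
    have h1 := Q_sub_T_ne hQt ((n:ℤ)-(m':ℤ))
    rw [cXY2] at h1
    intro h; apply h1
    field_simp
    first
    | linear_combination h
    | linear_combination -h
  have hXtQY : X*t - Q*Y ≠ 0 := by intro h; exact hQYXt (by linear_combination -h)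
  have hXtQ : X*t - Q ≠ 0 := by
    have h1 := Q_sub_T_ne hQt ((n:ℤ)+1)
    rw [cXt] at h1
    intro h; exact h1 (by linear_combination -h)
  have hXt2QY : X*t*t - Q*Y ≠ 0 := by
    have h1 := Q_sub_T_ne hQt ((n:ℤ)-(m':ℤ)+1)
    rw [cXY3] at h1
    intro h; apply h1
    field_simp
    first
    | linear_combination h
    | linear_combination -h
  have hQYXt2 : Q*Y - X*t*t ≠ 0 := by intro h; exact hXt2QY (by linear_combination -h)
  have g1 : fterm t Q n (m'+1) = 1/(u * B * (v' * (1 - Y⁻¹) * C)) := by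
    unfold fterm
    push_cast
    rw [show -((m':ℤ)+1) = -(m':ℤ)-1 by ring, show (n:ℤ)-((m':ℤ)+1)-1 = (n:ℤ)-(m':ℤ)-2 by ring,
      show (m':ℤ)+1-(n:ℤ)-1 = (m':ℤ)-(n:ℤ) by ring, Af_succ t m', cYinv',
      ← hud, ← hBd, ← hv'd, ← hCd]
  have g2 : fterm t Q n m' = 1/(u * B'' * (v' * C'')) := by
    unfold fterm
    rw [← hud, ← hB''d, ← hv'd, ← hC''d]
  have g3 : fterm t Q (n+1) m' = 1/((u * (1 - (X*t)⁻¹)) * B' * (v' * C')) := by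
    unfold fterm
    push_cast
    rw [show (n:ℤ)+1-(m':ℤ)-1 = (n:ℤ)-(m':ℤ) by ring, show -((n:ℤ)+1) = -(n:ℤ)-1 by ring,
      show (m':ℤ)-((n:ℤ)+1)-1 = (m':ℤ)-(n:ℤ)-2 by ring, Af_succ t n, cXtinv',
      ← hud, ← hB'd, ← hv'd, ← hC'd]
  have RB2 := relB2 t Q (n:ℤ) (m':ℤ) (Int.natCast_nonneg n)
  rw [← hBd, ← hB''d, cXY1, cYinv] at RB2
  have RC2 := relC2 t Q (n:ℤ) (m':ℤ) (Int.natCast_nonneg m')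
  rw [← hCd, ← hC''d, cYX] at RC2
  have RB1 := relB1 t Q (n:ℤ) (m':ℤ) (Int.natCast_nonneg n)
  rw [← hBd, ← hB'd, cXY1, cXY2, cYinv] at RB1
  have RC1 := relC1 t Q (n:ℤ) (m':ℤ) (Int.natCast_nonneg m')
  rw [← hCd, ← hC'd, cYX2, cYX, cXtinv] at RC1
  rw [g1, g2, g3, cXYinv, cXt, cXY3, cXY1]
  rw [keyE1 X Y u v' B C hu hv' hB hC hX hY hY1,
    keyE2 t Q X Y u v' B C B'' C'' ht hQ hX hY hu hv' hB hC hQY1 hQYX hXtQY RB2 RC2,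
    keyE3 t Q X Y u v' B C B' C' ht hQ hX hY hu hv' hB hC hXt1 hQY1 hQYX hQYXt hXtQ hXt2QY hQYXt2 RB1 RC1,
    keyE4 Q X Y u v' B C hQ hX hY hu hv' hB hC hY1 hQYX]
  exact key t Q X Y u v' B C ht hX hu hv' hB hC hY1 hQYX hQYXt

set_option maxHeartbeats 1000000 in
lemma sum_eq (ht : t ≠ 0) (hQ : Q ≠ 0) (htru : ∀ s : ℕ, 0 < s → t ^ s ≠ 1)
    (hQt : ∀ k : ℤ, Q ≠ t ^ k) :
    ∀ N : ℕ, ∑ k ∈ Finset.range (N+1), fterm t Q k (N-k) = 1 / Af t N := by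
  intro N
  induction N with
  | zero =>
    have h0 : Af t 0 = 1 := by rw [Af, Finset.Icc_eq_empty (by omega), Finset.prod_empty]
    have h1 : Pz t Q (-((0:ℕ):ℤ)) (((0:ℕ):ℤ)-((0:ℕ):ℤ)-1) = 1 := by
      rw [Pz, Finset.Icc_eq_empty (by norm_num), Finset.prod_empty]
    have h2 : Pq t Q (-((0:ℕ):ℤ)) (((0:ℕ):ℤ)-((0:ℕ):ℤ)-1) = 1 := by
      rw [Pq, Finset.Icc_eq_empty (by norm_num), Finset.prod_empty]
    rw [Finset.sum_range_succ, Finset.sum_range_zero, zero_add, h0]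
    show fterm t Q 0 (0-0) = 1/1
    rw [show (0:ℕ)-0 = 0 from rfl, fterm, h0, h1, h2]
    norm_num
  | succ N ih =>
    set g : ℕ → ℂ := fun j => t ^ (-((N:ℤ)+1)) * (1 - t^(j:ℤ)) * (Q - t^(j:ℤ))
        / (Q - t^(2*(j:ℤ)-(N:ℤ)-1)) * fterm t Q j (N+1-j) with hg
    have hc : (1 : ℂ) - t ^ (-((N:ℤ)+1)) ≠ 0 := one_sub_tzpow_ne ht htru (by omega)
    have hg0 : g 0 = 0 := by
      simp only [hg]
      push_cast
      rw [zpow_zero]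
      ring
    have htop : fterm t Q (N+1) (N+1-(N+1)) * (1 - t^(-((N:ℤ)+1))) = - g (N+1) := by
      simp only [hg]
      rw [show N+1-(N+1) = 0 from by omega]
      push_cast
      rw [show 2*((N:ℤ)+1)-(N:ℤ)-1 = (N:ℤ)+1 by ring, mul_div_assoc,
        div_self (Q_sub_T_ne hQt ((N:ℤ)+1)), mul_one]
      have ha : t^(-((N:ℤ)+1)) * t^((N:ℤ)+1) = 1 := by
        rw [← zpow_add₀ ht, show -((N:ℤ)+1)+((N:ℤ)+1) = 0 by ring, zpow_zero]
      linear_combination (-(fterm t Q (N+1) 0)) * ha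
    have hstep : ∀ k ∈ Finset.range (N+1),
        fterm t Q k (N+1-k) * (1 - t ^ (-((N:ℤ)+1)))
          = fterm t Q k (N-k) + (g (k+1) - g k) := by
      intro k hk
      rw [Finset.mem_range] at hk
      have hkN : k ≤ N := by omega
      set m' := N - k with hm'
      rw [show N+1-k = m'+1 from by omega]
      simp only [hg]
      rw [show N+1-(k+1) = m' from by omega, show N+1-k = m'+1 from by omega]
      push_cast
      rw [show 2*((k:ℤ)+1)-(N:ℤ)-1 = (k:ℤ)-(m':ℤ)+1 from by omega,
        show 2*(k:ℤ)-(N:ℤ)-1 = (k:ℤ)-(m':ℤ)-1 from by omega,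
        show -((N:ℤ)+1) = -((k:ℤ)+(m':ℤ)+1) from by omega]
      linear_combination tele ht hQ htru hQt k m'
    have key1 : (∑ k ∈ Finset.range (N+1+1), fterm t Q k (N+1-k)) * (1 - t ^ (-((N:ℤ)+1)))
        = ∑ k ∈ Finset.range (N+1), fterm t Q k (N-k) := by
      rw [Finset.sum_mul, Finset.sum_range_succ, Finset.sum_congr rfl hstep,
        Finset.sum_add_distrib, Finset.sum_range_sub g, hg0, htop]
      ring
    rw [Af_succ t N, ← div_div, ← ih, ← key1, mul_div_assoc, div_self hc, mul_one]

end AGTaux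


open AGTaux in
/-- **Crystallized simplest 5D AGT identity.**
For every `N ≥ 0`,
`Σ_{n+m=N} 1 / [ ∏_{s=1}^{n}(1−t^{−s})(1−Q^{−1}t^{n−m−s}) · ∏_{s=1}^{m}(1−t^{−s})(1−Qt^{m−n−s}) ]
  = 1 / ∏_{s=1}^{N}(1−t^{−s})`,
stated for all complex `t, Q` for which every factor appearing in a denominator is nonzero
(guaranteed here by `t ≠ 0`, `t` not a root of unity, `Q ≠ 0` and `Q ∉ {t^k : k ∈ ℤ}`). -/
theorem crystallized_pure_AGT_identity (N : ℕ) (t Q : ℂ) (ht : t ≠ 0) (hQ : Q ≠ 0)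
    (htru : ∀ s : ℕ, 0 < s → t ^ s ≠ 1) (hQt : ∀ k : ℤ, Q ≠ t ^ k) :
    ∑ p ∈ Finset.HasAntidiagonal.antidiagonal N,
        (1 : ℂ) /
          ((∏ s ∈ Finset.Icc 1 p.1,
              ((1 - t ^ (-(s : ℤ))) * (1 - Q⁻¹ * t ^ ((p.1 : ℤ) - (p.2 : ℤ) - (s : ℤ))))) *
            ∏ s ∈ Finset.Icc 1 p.2,
              ((1 - t ^ (-(s : ℤ))) * (1 - Q * t ^ ((p.2 : ℤ) - (p.1 : ℤ) - (s : ℤ)))))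
      = 1 / ∏ s ∈ Finset.Icc 1 N, (1 - t ^ (-(s : ℤ))) := by
  rw [Finset.Nat.sum_antidiagonal_eq_sum_range_succ_mk]
  have h := sum_eq ht hQ htru hQt N
  calc ∑ k ∈ Finset.range (N+1),
        (1 : ℂ) /
          ((∏ s ∈ Finset.Icc 1 k,
              ((1 - t ^ (-(s : ℤ))) * (1 - Q⁻¹ * t ^ ((k : ℤ) - ((N-k : ℕ) : ℤ) - (s : ℤ))))) *
            ∏ s ∈ Finset.Icc 1 (N-k),
              ((1 - t ^ (-(s : ℤ))) * (1 - Q * t ^ (((N-k : ℕ) : ℤ) - (k : ℤ) - (s : ℤ)))))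
      = ∑ k ∈ Finset.range (N+1), fterm t Q k (N-k) := by
        apply Finset.sum_congr rfl
        intro k hk
        rw [fterm, Af, Af, ← B_reindex t Q k (N-k), ← C_reindex t Q k (N-k),
          ← Finset.prod_mul_distrib, ← Finset.prod_mul_distrib]
    _ = 1 / Af t N := h
    _ = 1 / ∏ s ∈ Finset.Icc 1 N, (1 - t ^ (-(s : ℤ))) := by rw [Af]
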